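/- Let V be a real Hilbert space, N ≥ 1, τ > 0. Let B : V →L[ℝ] V be continuous linear, symmetric (⟪B u, v⟫ = ⟪u, B v⟫) and nonnegative (⟪B u, u⟫ ≥ 0), and let K̂ : V →L[ℝ] V be continuous linear, symmetric and elliptic, i.e. there exists c > 0 with ⟪K̂ u, u⟫ ≥ c‖u‖² for all u ∈ V. Then for every g : ZMod N → V there exists a unique w : ZMod N → V such that for every n : ZMod N, (1/τ) • B (w n − w (n − 1)) + K̂ (w n) = g n. -/

import Mathlib

open RealInnerProductSpace

set_option maxHeartbeats 1000000
set_option synthInstance.maxHeartbeats 1000000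

/-- Well-definedness of one step of the fixed-point iteration in Theorem 3:
the linear time-periodic time-invariant system has a unique solution. -/
theorem stmt_6 {V : Type*} [NormedAddCommGroup V] [InnerProductSpace ℝ V]
    [CompleteSpace V]
    (N : ℕ) [NeZero N] (τ : ℝ) (hτ : 0 < τ)
    (B : V →L[ℝ] V)
    (hBsymm : ∀ u v : V, ⟪B u, v⟫ = ⟪u, B v⟫)
    (hBnonneg : ∀ u : V, 0 ≤ ⟪B u, u⟫)
    (Khat : V →L[ℝ] V)
    (hKhatsymm : ∀ u v : V, ⟪Khat u, v⟫ = ⟪u, Khat v⟫)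
    (c : ℝ) (hc : 0 < c)
    (hKhatell : ∀ u : V, c * ‖u‖ ^ 2 ≤ ⟪Khat u, u⟫) :
    ∀ g : ZMod N → V, ∃! w : ZMod N → V, ∀ n : ZMod N,
      (1 / τ) • B (w n - w (n - 1)) + Khat (w n) = g n := by
  intro g
  classical
  haveI : CompleteSpace (PiLp 2 fun _ : ZMod N => V) :=
    inferInstance
  -- the system operator on the plain pi type
  let T0 : (ZMod N → V) →L[ℝ] (ZMod N → V) :=
    ContinuousLinearMap.pi (fun n =>
      (((1/τ) • B).comp (((ContinuousLinearMap.proj n : (ZMod N → V) →L[ℝ] V) - (ContinuousLinearMap.proj (n-1) : (ZMod N → V) →L[ℝ] V))))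
      + Khat.comp ((ContinuousLinearMap.proj n : (ZMod N → V) →L[ℝ] V)))
  have hT0 : ∀ w n, T0 w n = (1/τ) • B (w n - w (n-1)) + Khat (w n) := by
    intro w n
    simp [T0, ContinuousLinearMap.pi_apply, smul_sub]
  -- transport to the L2 pi space
  let e := PiLp.continuousLinearEquiv 2 ℝ (fun _ : ZMod N => V)
  let T : PiLp 2 (fun _ : ZMod N => V) →L[ℝ] PiLp 2 (fun _ : ZMod N => V) :=
    (e.symm.toContinuousLinearMap.comp T0).comp e.toContinuousLinearMap
  have hT : ∀ (w : PiLp 2 (fun _ : ZMod N => V)) (n : ZMod N),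
      T w n = (1/τ) • B (w n - w (n-1)) + Khat (w n) := by
    intro w n
    have : T w = (e.symm (T0 (e w))) := rfl
    rw [this]
    exact hT0 _ n
  -- the key nonnegativity of the cyclic B-sum
  have hBsum : ∀ w : ZMod N → V,
      0 ≤ ∑ n : ZMod N, ⟪B (w n - w (n-1)), w n⟫ := by
    intro w
    have hshift : ∑ n : ZMod N, ⟪B (w (n-1)), w (n-1)⟫ = ∑ n : ZMod N, ⟪B (w n), w n⟫ := by
      exact Fintype.sum_equiv (Equiv.subRight (1 : ZMod N)) _ _ (fun n => rfl)
    have hcomm : ∀ n : ZMod N, ⟪B (w n), w (n-1)⟫ = ⟪B (w (n-1)), w n⟫ := by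
      intro n
      rw [hBsymm, real_inner_comm]
    have h0 : 0 ≤ ∑ n : ZMod N, ⟪B (w n - w (n-1)), w n - w (n-1)⟫ :=
      Finset.sum_nonneg fun n _ => hBnonneg _
    have hexp : ∑ n : ZMod N, ⟪B (w n - w (n-1)), w n - w (n-1)⟫
        = 2 * ∑ n : ZMod N, ⟪B (w n - w (n-1)), w n⟫ := by
      have : ∀ n : ZMod N, ⟪B (w n - w (n-1)), w n - w (n-1)⟫
          = (⟪B (w n), w n⟫ - ⟪B (w (n-1)), w n⟫)
            + (⟪B (w (n-1)), w (n-1)⟫ - ⟪B (w (n-1)), w n⟫) := by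
        intro n
        rw [map_sub, inner_sub_left, inner_sub_right, inner_sub_right, hcomm n]
        ring
      rw [Finset.sum_congr rfl (fun n _ => this n), Finset.sum_add_distrib,
        Finset.sum_sub_distrib, Finset.sum_sub_distrib, hshift]
      have : ∀ n : ZMod N, ⟪B (w n - w (n-1)), w n⟫
          = ⟪B (w n), w n⟫ - ⟪B (w (n-1)), w n⟫ := by
        intro n; rw [map_sub, inner_sub_left]
      rw [Finset.sum_congr rfl (fun n _ => this n), Finset.sum_sub_distrib]
      ring
    linarith [h0, hexp]
  -- coercivity of the bilinear form ⟪T ·, ·⟫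
  let Bf : PiLp 2 (fun _ : ZMod N => V) →L[ℝ] PiLp 2 (fun _ : ZMod N => V) →L[ℝ] ℝ :=
    (innerSL ℝ).comp T
  have hBf : ∀ u v, Bf u v = ⟪T u, v⟫ := fun u v => rfl
  have hcoer : IsCoercive Bf := by
    refine ⟨c, hc, fun u => ?_⟩
    have h1 : Bf u u = ∑ n : ZMod N, ⟪T u n, u n⟫ := by
      rw [hBf]; exact PiLp.inner_apply _ _
    have h2 : ∀ n : ZMod N, ⟪T u n, u n⟫
        = (1/τ) * ⟪B (u n - u (n-1)), u n⟫ + ⟪Khat (u n), u n⟫ := by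
      intro n
      rw [hT, inner_add_left, real_inner_smul_left]
    have h3 : c * ‖u‖ * ‖u‖ = ∑ n : ZMod N, c * ‖u n‖ ^ 2 := by
      rw [← Finset.mul_sum]
      have := PiLp.norm_sq_eq_of_L2 (fun _ : ZMod N => V) u
      ring_nf
      rw [mul_comm, ← this]
      ring
    rw [h1, Finset.sum_congr rfl (fun n _ => h2 n), h3, Finset.sum_add_distrib]
    have hA : 0 ≤ ∑ n : ZMod N, (1/τ) * ⟪B (u n - u (n-1)), u n⟫ := by
      rw [← Finset.mul_sum]
      exact mul_nonneg (by positivity) (hBsum u)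
    have hK : ∑ n : ZMod N, c * ‖u n‖ ^ 2 ≤ ∑ n : ZMod N, ⟪Khat (u n), u n⟫ :=
      Finset.sum_le_sum fun n _ => hKhatell (u n)
    linarith
  -- Lax-Milgram
  let E := hcoer.continuousLinearEquivOfBilin
  have hET : ∀ u, E u = T u := by
    intro u
    apply ext_inner_right ℝ
    intro v
    rw [hcoer.continuousLinearEquivOfBilin_apply, hBf]
  -- existence and uniqueness
  refine ⟨(E.symm (WithLp.toLp 2 g)).ofLp, ?_, ?_⟩
  · intro n
    have : T (E.symm (WithLp.toLp 2 g)) = WithLp.toLp 2 g := by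
      rw [← hET, E.apply_symm_apply]
    have := congrArg (fun x : PiLp 2 (fun _ : ZMod N => V) => x n) this
    dsimp only at this
    rw [hT] at this
    exact this
  · intro w hw
    have hTw : T (WithLp.toLp 2 w) = WithLp.toLp 2 g := by
      refine PiLp.ext fun n => ?_
      rw [hT]; exact hw n
    have : E (WithLp.toLp 2 w) = E (E.symm (WithLp.toLp 2 g)) := by
      rw [E.apply_symm_apply, hET]; exact hTw
    exact congrArg WithLp.ofLp (E.injective this)
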